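/- Let a, f ≥ 1 and let Y and Z be Hermitian matrices on ℂ^a ⊗ ℂ^f (indexed by pairs in Fin a × Fin f). Assume Y is positive semidefinite and its partial transpose τ_F(Y) is also positive semidefinite (i.e., Y is a PPT operator). Assume moreover that there is a real number c ≥ 0 and a positive semidefinite matrix P such that |τ_F(Z)| ≤ c • P in the Loewner order. Then Re tr[Y · Z] ≤ c · Re tr[τ_F(Y) · P]. -/

import Mathlib

open scoped BigOperators Kronecker ComplexOrder
open Matrix

/-- von Neumann entropy of a matrix (via eigenvalues when Hermitian, else 0). -/
noncomputable def vnEntropy {ι : Type*} [Fintype ι] [DecidableEq ι]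
    (ρ : Matrix ι ι ℂ) : ℝ :=
  if h : ρ.IsHermitian then -∑ i, h.eigenvalues i * Real.log (h.eigenvalues i) else 0

/-- Twirling operation induced by a family of matrices indexed by a finite group. -/
noncomputable def twirl {G ι : Type*} [Fintype G] [Fintype ι]
    (U : G → Matrix ι ι ℂ) (X : Matrix ι ι ℂ) : Matrix ι ι ℂ :=
  (Fintype.card G : ℂ)⁻¹ • ∑ g, U g * X * (U g)ᴴ

/-- Apply a real function spectrally to a Hermitian matrix (0 otherwise). -/
noncomputable def matFun {ι : Type*} [Fintype ι] [DecidableEq ι]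
    (f : ℝ → ℝ) (ρ : Matrix ι ι ℂ) : Matrix ι ι ℂ :=
  if h : ρ.IsHermitian then
    (h.eigenvectorUnitary : Matrix ι ι ℂ) *
      Matrix.diagonal (fun i => (f (h.eigenvalues i) : ℂ)) *
      (star (h.eigenvectorUnitary : Matrix ι ι ℂ))
  else 0

/-- Spectral power `ρ ^ t` with the convention `0 ^ t = 0`. -/
noncomputable def matPow {ι : Type*} [Fintype ι] [DecidableEq ι]
    (ρ : Matrix ι ι ℂ) (t : ℝ) : Matrix ι ι ℂ :=
  matFun (fun x => if x = 0 then 0 else x ^ t) ρ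

/-- Spectral logarithm with the convention `log 0 = 0`. -/
noncomputable def matLog {ι : Type*} [Fintype ι] [DecidableEq ι]
    (ρ : Matrix ι ι ℂ) : Matrix ι ι ℂ :=
  matFun Real.log ρ

/-- Absolute value `|M| = √(MᴴM)`. -/
noncomputable def matAbs {ι : Type*} [Fintype ι] [DecidableEq ι]
    (M : Matrix ι ι ℂ) : Matrix ι ι ℂ :=
  matPow (Mᴴ * M) (1/2 : ℝ)


/-- Partial trace over the second (F) factor. -/
noncomputable def ptraceF {α β : Type*} [Fintype β]
    (X : Matrix (α × β) (α × β) ℂ) : Matrix α α ℂ :=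
  fun i k => ∑ j, X (i, j) (k, j)

/-- Partial trace over the first (A) factor. -/
noncomputable def ptraceA {α β : Type*} [Fintype α]
    (X : Matrix (α × β) (α × β) ℂ) : Matrix β β ℂ :=
  fun j l => ∑ i, X (i, j) (i, l)

/-- Partial transpose on the second (F) factor. -/
def ptransF {α β : Type*} (X : Matrix (α × β) (α × β) ℂ) :
    Matrix (α × β) (α × β) ℂ :=
  fun p q => X (p.1, q.2) (q.1, p.2)

/-- Quantum Rényi entropy `H_β(ρ) = (1/(1−β)) log tr[ρ^β]`. -/
noncomputable def renyiEntropy {ι : Type*} [Fintype ι] [DecidableEq ι]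
    (β : ℝ) (ρ : Matrix ι ι ℂ) : ℝ :=
  (1 - β)⁻¹ * Real.log ((matPow ρ β).trace.re)


section Aux

open scoped ComplexOrder
open Matrix

variable {n : Type*} [Fintype n] [DecidableEq n]

section SqrtCompat

open scoped MatrixOrder

/-- Square root of a positive semidefinite matrix (spectral definition). -/
noncomputable def Matrix.PosSemidef.sqrt {A : Matrix n n ℂ} (hA : A.PosSemidef) :
    Matrix n n ℂ :=
  (hA.1.eigenvectorUnitary : Matrix n n ℂ) *
    Matrix.diagonal ((RCLike.ofReal : ℝ → ℂ) ∘ Real.sqrt ∘ hA.1.eigenvalues) *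
    (star (hA.1.eigenvectorUnitary : Matrix n n ℂ))

lemma Matrix.PosSemidef.sqrt_eq_cfcSqrt {A : Matrix n n ℂ} (hA : A.PosSemidef) :
    hA.sqrt = CFC.sqrt A := by
  rw [CFC.sqrt_eq_cfc, cfc_nnreal_eq_real _ A, hA.1.cfc_eq, Matrix.IsHermitian.cfc,
    Unitary.conjStarAlgAut_apply, Matrix.PosSemidef.sqrt]
  congr 2
  congr 1
  funext i
  simp [Real.coe_sqrt, Real.coe_toNNReal', max_eq_left (hA.eigenvalues_nonneg i)]

lemma Matrix.PosSemidef.posSemidef_sqrt {A : Matrix n n ℂ} (hA : A.PosSemidef) :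
    hA.sqrt.PosSemidef := by
  rw [hA.sqrt_eq_cfcSqrt]
  exact Matrix.nonneg_iff_posSemidef.mp (CFC.sqrt_nonneg A)

lemma Matrix.PosSemidef.sqrt_mul_self {A : Matrix n n ℂ} (hA : A.PosSemidef) :
    hA.sqrt * hA.sqrt = A := by
  rw [hA.sqrt_eq_cfcSqrt]
  exact CFC.sqrt_mul_sqrt_self A (Matrix.nonneg_iff_posSemidef.mpr hA)

lemma Matrix.PosSemidef.eq_sqrt_of_sq_eq {A B : Matrix n n ℂ} (hB : B.PosSemidef)
    (hA : A.PosSemidef) (h : B ^ 2 = A) : B = hA.sqrt := by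
  rw [hA.sqrt_eq_cfcSqrt]
  exact (CFC.sqrt_unique (by rw [← sq]; exact h) (Matrix.nonneg_iff_posSemidef.mpr hB)).symm

end SqrtCompat

lemma matPow_half_eq_sqrt {A : Matrix n n ℂ} (hA : A.PosSemidef) :
    matPow A (1/2 : ℝ) = hA.sqrt := by
  unfold matPow matFun Matrix.PosSemidef.sqrt
  rw [dif_pos hA.1]
  have hfun : (fun i => (((fun x => if x = 0 then 0 else x ^ (1/2 : ℝ))
        (hA.1.eigenvalues i) : ℝ) : ℂ))
      = ((↑) ∘ Real.sqrt ∘ hA.1.eigenvalues) := by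
    funext i
    simp only [Function.comp_apply]
    norm_cast
    rcases eq_or_lt_of_le (hA.eigenvalues_nonneg i) with h | h
    · simp [← h]
    · rw [if_neg h.ne', Real.sqrt_eq_rpow]
  rw [hfun]
  rfl

lemma trace_re_nonneg_of_posSemidef {N : Matrix n n ℂ} (hN : N.PosSemidef) :
    0 ≤ (N.trace).re := by
  have h : ∀ i, 0 ≤ (N i i).re := by
    intro i
    have h2 := hN.dotProduct_mulVec_nonneg (Pi.single i 1)
    have heq : star (Pi.single i 1) ⬝ᵥ N *ᵥ (Pi.single i 1) = N i i := by
      simp [dotProduct, mulVec, Pi.single_apply, Finset.mul_sum]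
    rw [heq] at h2
    exact (Complex.le_def.mp h2).1
  rw [Matrix.trace, Complex.re_sum]
  exact Finset.sum_nonneg fun i _ => h i

lemma trace_mul_re_nonneg {A M : Matrix n n ℂ} (hA : A.PosSemidef) (hM : M.PosSemidef) :
    0 ≤ ((A * M).trace).re := by
  have hS := hA.posSemidef_sqrt
  have h1 : A * M = hA.sqrt * (hA.sqrt * M) := by
    rw [← mul_assoc, hA.sqrt_mul_self]
  rw [h1, Matrix.trace_mul_comm]
  have hpsd : (hA.sqrt * M * hA.sqrt).PosSemidef := by
    have h3 := hM.mul_mul_conjTranspose_same hA.sqrt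
    rwa [hS.1.eq] at h3
  exact trace_re_nonneg_of_posSemidef hpsd

lemma conj_diag_mul {U D E : Matrix n n ℂ} (hU : star U * U = 1) :
    (U * D * star U) * (U * E * star U) = U * (D * E) * star U := by
  calc (U * D * star U) * (U * E * star U)
      = U * (D * ((star U * U) * (E * star U))) := by simp only [mul_assoc]
    _ = U * (D * E) * star U := by rw [hU, one_mul]; simp only [mul_assoc]

lemma matAbs_psd_and_sub_psd {B : Matrix n n ℂ} (hB : B.IsHermitian) :
    (matAbs B).PosSemidef ∧ (matAbs B - B).PosSemidef := by
  have hBB : (Bᴴ * B).PosSemidef := Matrix.posSemidef_conjTranspose_mul_self B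
  have habs : matAbs B = hBB.sqrt := matPow_half_eq_sqrt hBB
  set U : Matrix n n ℂ := (hB.eigenvectorUnitary : Matrix n n ℂ) with hUdef
  have hU : star U * U = 1 :=
    Matrix.mem_unitaryGroup_iff'.mp hB.eigenvectorUnitary.2
  have hspec : B = U * Matrix.diagonal ((↑) ∘ hB.eigenvalues) * star U :=
    hB.spectral_theorem
  set D : Matrix n n ℂ :=
    Matrix.diagonal (fun i => ((|hB.eigenvalues i| : ℝ) : ℂ)) with hDdef
  set C : Matrix n n ℂ := U * D * star U with hCdef
  have hCpsd : C.PosSemidef := by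
    apply Matrix.PosSemidef.mul_mul_conjTranspose_same
    refine Matrix.posSemidef_diagonal_iff.mpr fun i => ?_
    exact_mod_cast Complex.zero_le_real.mpr (abs_nonneg _)
  have hC2 : C ^ 2 = Bᴴ * B := by
    rw [hB.eq, pow_two, hCdef, conj_diag_mul hU]
    conv_rhs => rw [hspec]
    rw [conj_diag_mul hU]
    congr 1
    congr 1
    rw [hDdef, Matrix.diagonal_mul_diagonal, Matrix.diagonal_mul_diagonal]
    congr 1
    funext i
    simp only [Function.comp_apply, ← Complex.ofReal_mul, abs_mul_abs_self]
  have hCeq : C = hBB.sqrt := hCpsd.eq_sqrt_of_sq_eq hBB hC2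
  have habsC : matAbs B = C := by rw [habs, hCeq]
  refine ⟨habsC ▸ hCpsd, ?_⟩
  rw [habsC]
  have hsub : C - B = U * Matrix.diagonal
      (fun i => ((|hB.eigenvalues i| - hB.eigenvalues i : ℝ) : ℂ)) * star U := by
    rw [hCdef]
    conv_lhs => rw [hspec]
    rw [← Matrix.sub_mul, ← Matrix.mul_sub, hDdef, Matrix.diagonal_sub]
    congr 2
    funext i
    push_cast
    rfl
  rw [hsub]
  apply Matrix.PosSemidef.mul_mul_conjTranspose_same
  refine Matrix.posSemidef_diagonal_iff.mpr fun i => ?_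
  exact Complex.zero_le_real.mpr (by simp [sub_nonneg, le_abs_self])

lemma ptransF_isHermitian {α β : Type*} {X : Matrix (α × β) (α × β) ℂ}
    (hX : X.IsHermitian) : (ptransF X).IsHermitian := by
  ext p q
  simp only [Matrix.conjTranspose_apply, ptransF]
  have h2 := congrFun (congrFun hX ((p.1, q.2))) ((q.1, p.2))
  simpa [Matrix.conjTranspose_apply] using h2

lemma trace_ptransF_mul {α β : Type*} [Fintype α] [Fintype β]
    (X W : Matrix (α × β) (α × β) ℂ) :
    (ptransF X * ptransF W).trace = (X * W).trace := by
  have key : ∀ (A B : Matrix (α × β) (α × β) ℂ),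
      (A * B).trace = ∑ pq : (α × β) × (α × β), A pq.1 pq.2 * B pq.2 pq.1 := by
    intro A B
    rw [Matrix.trace]
    simp only [Matrix.diag, Matrix.mul_apply]
    rw [← Finset.sum_product', Finset.univ_product_univ]
  rw [key, key]
  let e : ((α × β) × (α × β)) ≃ ((α × β) × (α × β)) :=
    ⟨fun x => ((x.1.1, x.2.2), (x.2.1, x.1.2)),
     fun x => ((x.1.1, x.2.2), (x.2.1, x.1.2)),
     fun x => rfl, fun x => rfl⟩
  exact Fintype.sum_equiv e _ _ (fun x => rfl)

end Aux

/-- Core step of the strong converse for PPT decoders: if `Y` is PPT and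
`|τ_F(Z)| ≤ c • P`, then `Re tr[Y Z] ≤ c · Re tr[τ_F(Y) P]`. -/
theorem trace_le_of_ppt_of_abs_ptrans_le {a f : ℕ} (ha : 1 ≤ a) (hf : 1 ≤ f)
    (Y Z : Matrix (Fin a × Fin f) (Fin a × Fin f) ℂ)
    (hYherm : Y.IsHermitian) (hZherm : Z.IsHermitian)
    (hYpsd : Y.PosSemidef) (hYppt : (ptransF Y).PosSemidef)
    (c : ℝ) (hc : 0 ≤ c)
    (P : Matrix (Fin a × Fin f) (Fin a × Fin f) ℂ) (hP : P.PosSemidef)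
    (hZbound : ((c : ℂ) • P - matAbs (ptransF Z)).PosSemidef) :
    ((Y * Z).trace).re ≤ c * ((ptransF Y * P).trace).re := by
  set tY := ptransF Y with htY
  set tZ := ptransF Z with htZ
  have htZh : tZ.IsHermitian := ptransF_isHermitian hZherm
  obtain ⟨habs_psd, hsub_psd⟩ := matAbs_psd_and_sub_psd htZh
  have h1 : 0 ≤ ((tY * (matAbs tZ - tZ)).trace).re :=
    trace_mul_re_nonneg hYppt hsub_psd
  have h2 : 0 ≤ ((tY * ((c : ℂ) • P - matAbs tZ)).trace).re :=
    trace_mul_re_nonneg hYppt hZbound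
  have he : (Y * Z).trace = (tY * tZ).trace := (trace_ptransF_mul Y Z).symm
  have h1' : ((tY * tZ).trace).re ≤ ((tY * matAbs tZ).trace).re := by
    have : (tY * (matAbs tZ - tZ)).trace = (tY * matAbs tZ).trace - (tY * tZ).trace := by
      rw [Matrix.mul_sub, Matrix.trace_sub]
    rw [this, Complex.sub_re] at h1
    linarith
  have h2' : ((tY * matAbs tZ).trace).re ≤ c * ((tY * P).trace).re := by
    have hsm : (tY * ((c : ℂ) • P - matAbs tZ)).trace
        = (c : ℂ) * (tY * P).trace - (tY * matAbs tZ).trace := by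
      rw [Matrix.mul_sub, Matrix.trace_sub, Matrix.mul_smul, Matrix.trace_smul, smul_eq_mul]
    rw [hsm, Complex.sub_re, Complex.re_ofReal_mul] at h2
    linarith
  rw [he]
  linarith
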